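/- Every graph G in the family 𝓑 contains at most one vertex of degree 1, and no two adjacent vertices of G both have degree 2 in G. -/
import Mathlib


namespace PaperIndepDom

open SimpleGraph

/-- The degree of a vertex `v` in a graph `G`. -/
noncomputable def deg {V : Type*} (G : SimpleGraph V) (v : V) : ℕ :=
  (G.neighborSet v).ncard

/-- The base graph `B₁`: a copy of `K_{2,3}` (vertices `0, 1` forming the partite set of
size 2, vertices `2, 3, 4` forming the partite set of size 3) together with a new root
vertex `5` joined to the degree-2 vertex `2`. -/
def baseGraph : SimpleGraph (Fin 6) :=
  SimpleGraph.fromRel (fun i j =>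
    (i.val ≤ 1 ∧ 2 ≤ j.val ∧ j.val ≤ 4) ∨ (i = 2 ∧ j = 5))

/-- The graph obtained from `G` by adding a vertex-disjoint copy of `K_{2,3}`
(on the vertex set `Fin 2 ⊕ Fin 3`) together with an edge joining the vertex `v'` of `G`
to the degree-2 vertex `Sum.inr t` of the added copy of `K_{2,3}` (operation `O₁`). -/
def addK23 {V : Type*} (G : SimpleGraph V) (v' : V) (t : Fin 3) :
    SimpleGraph (V ⊕ (Fin 2 ⊕ Fin 3)) :=
  SimpleGraph.fromRel (fun x y =>
    (∃ a b, G.Adj a b ∧ x = Sum.inl a ∧ y = Sum.inl b) ∨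
    (∃ i j, x = Sum.inr (Sum.inl i) ∧ y = Sum.inr (Sum.inr j)) ∨
    (x = Sum.inl v' ∧ y = Sum.inr (Sum.inr t)))

set_option linter.unusedSectionVars false

lemma deg_eq_degree {V : Type*} [Fintype V] (G : SimpleGraph V) [DecidableRel G.Adj] (v : V) :
    deg G v = G.degree v := by
  rw [deg, Set.ncard_eq_toFinset_card', ← SimpleGraph.neighborFinset_def]
  rfl

instance : DecidableRel baseGraph.Adj := fun a b =>
  decidable_of_iff _ (SimpleGraph.fromRel_adj _ a b).symm

def Good {V : Type} (G : SimpleGraph V) : Prop :=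
  Finite V ∧ (∀ v, 1 ≤ deg G v) ∧ {v | deg G v = 1}.Subsingleton ∧
  (∀ v u, deg G v = 1 → G.Adj v u → 3 ≤ deg G u) ∧
  ∀ u v, G.Adj u v → ¬(deg G u = 2 ∧ deg G v = 2)

lemma good_base : Good baseGraph := by
  refine ⟨inferInstance, ?_, ?_, ?_, ?_⟩
  · intro v; rw [deg_eq_degree]; revert v; decide
  · intro x hx y hy
    simp only [Set.mem_setOf_eq, deg_eq_degree] at hx hy
    revert hx hy; revert x y; decide
  · intro v u; simp only [deg_eq_degree]; revert v u; decide
  · intro u v; simp only [deg_eq_degree]; revert u v; decide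

section AddK23
variable {V : Type} (G : SimpleGraph V) (v' : V) (t : Fin 3)

lemma addK23_adj_iff (x y : V ⊕ (Fin 2 ⊕ Fin 3)) : (addK23 G v' t).Adj x y ↔
    (∃ a b, G.Adj a b ∧ x = .inl a ∧ y = .inl b) ∨
    (∃ i j, (x = .inr (.inl i) ∧ y = .inr (.inr j)) ∨ (y = .inr (.inl i) ∧ x = .inr (.inr j))) ∨
    ((x = .inl v' ∧ y = .inr (.inr t)) ∨ (y = .inl v' ∧ x = .inr (.inr t))) := by
  rw [addK23, SimpleGraph.fromRel_adj]
  constructor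
  · rintro ⟨hne, h | h⟩ <;>
      rcases h with ⟨a, b, hab, rfl, rfl⟩ | ⟨i, j, rfl, rfl⟩ | ⟨rfl, rfl⟩
    · exact Or.inl ⟨a, b, hab, rfl, rfl⟩
    · exact Or.inr (Or.inl ⟨i, j, Or.inl ⟨rfl, rfl⟩⟩)
    · exact Or.inr (Or.inr (Or.inl ⟨rfl, rfl⟩))
    · exact Or.inl ⟨b, a, hab.symm, rfl, rfl⟩
    · exact Or.inr (Or.inl ⟨i, j, Or.inr ⟨rfl, rfl⟩⟩)
    · exact Or.inr (Or.inr (Or.inr ⟨rfl, rfl⟩))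
  · rintro (⟨a, b, hab, rfl, rfl⟩ | ⟨i, j, ⟨rfl, rfl⟩ | ⟨rfl, rfl⟩⟩ | ⟨rfl, rfl⟩ | ⟨rfl, rfl⟩)
    · exact ⟨by simp [hab.ne], Or.inl (Or.inl ⟨a, b, hab, rfl, rfl⟩)⟩
    · exact ⟨by simp, Or.inl (Or.inr (Or.inl ⟨i, j, rfl, rfl⟩))⟩
    · exact ⟨by simp, Or.inr (Or.inr (Or.inl ⟨i, j, rfl, rfl⟩))⟩
    · exact ⟨by simp, Or.inl (Or.inr (Or.inr ⟨rfl, rfl⟩))⟩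
    · exact ⟨by simp, Or.inr (Or.inr (Or.inr ⟨rfl, rfl⟩))⟩

lemma adj_inl_inl (a b : V) : (addK23 G v' t).Adj (.inl a) (.inl b) ↔ G.Adj a b := by
  rw [addK23_adj_iff]; constructor
  · rintro (⟨a', b', hab, h1, h2⟩ | ⟨i, j, ⟨h, _⟩ | ⟨_, h⟩⟩ | ⟨_, h⟩ | ⟨_, h⟩) <;>
      simp_all
  · intro h; exact Or.inl ⟨a, b, h, rfl, rfl⟩

lemma adj_inl_inr2 (a : V) (i : Fin 2) :
    ¬ (addK23 G v' t).Adj (.inl a) (.inr (.inl i)) := by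
  rw [addK23_adj_iff]
  rintro (⟨a', b', hab, h1, h2⟩ | ⟨i', j', ⟨h, h'⟩ | ⟨h, h'⟩⟩ | ⟨h, h'⟩ | ⟨h, h'⟩) <;> simp_all

lemma adj_inl_inr3 (a : V) (j : Fin 3) :
    (addK23 G v' t).Adj (.inl a) (.inr (.inr j)) ↔ a = v' ∧ j = t := by
  rw [addK23_adj_iff]; constructor
  · rintro (⟨a', b', hab, h1, h2⟩ | ⟨i', j', ⟨h, h'⟩ | ⟨h, h'⟩⟩ | ⟨h, h'⟩ | ⟨h, h'⟩) <;> simp_all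
  · rintro ⟨rfl, rfl⟩; exact Or.inr (Or.inr (Or.inl ⟨rfl, rfl⟩))

lemma adj_inr2_inr2 (i i' : Fin 2) :
    ¬ (addK23 G v' t).Adj (.inr (.inl i)) (.inr (.inl i')) := by
  rw [addK23_adj_iff]
  rintro (⟨a', b', hab, h1, h2⟩ | ⟨i'', j', ⟨h, h'⟩ | ⟨h, h'⟩⟩ | ⟨h, h'⟩ | ⟨h, h'⟩) <;> simp_all

lemma adj_inr2_inr3 (i : Fin 2) (j : Fin 3) :
    (addK23 G v' t).Adj (.inr (.inl i)) (.inr (.inr j)) := by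
  rw [addK23_adj_iff]; exact Or.inr (Or.inl ⟨i, j, Or.inl ⟨rfl, rfl⟩⟩)

lemma adj_inr3_inr3 (j j' : Fin 3) :
    ¬ (addK23 G v' t).Adj (.inr (.inr j)) (.inr (.inr j')) := by
  rw [addK23_adj_iff]
  rintro (⟨a', b', hab, h1, h2⟩ | ⟨i'', j'', ⟨h, h'⟩ | ⟨h, h'⟩⟩ | ⟨h, h'⟩ | ⟨h, h'⟩) <;> simp_all

variable [Finite V]

lemma nbhd_range2 : (Set.range (fun i : Fin 2 => (Sum.inr (Sum.inl i) : V ⊕ (Fin 2 ⊕ Fin 3)))).ncard = 2 := by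
  rw [← Set.image_univ, Set.ncard_image_of_injective _ (fun a b h => by simpa using h),
    Set.ncard_univ]
  simp

lemma nbhd_range3 : (Set.range (fun j : Fin 3 => (Sum.inr (Sum.inr j) : V ⊕ (Fin 2 ⊕ Fin 3)))).ncard = 3 := by
  rw [← Set.image_univ, Set.ncard_image_of_injective _ (fun a b h => by simpa using h),
    Set.ncard_univ]
  simp

lemma deg_addK23_inl_ne {a : V} (ha : a ≠ v') :
    deg (addK23 G v' t) (.inl a) = deg G a := by
  have hset : (addK23 G v' t).neighborSet (.inl a) = Sum.inl '' G.neighborSet a := by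
    ext x
    rcases x with b | (i | j)
    · simp only [mem_neighborSet, adj_inl_inl, Set.mem_image]
      constructor
      · intro h; exact ⟨b, h, rfl⟩
      · rintro ⟨b', hb', h⟩; simp_all [mem_neighborSet]
    · simp only [mem_neighborSet, Set.mem_image]
      constructor
      · intro h; exact absurd h (adj_inl_inr2 G v' t a i)
      · rintro ⟨b', hb', h⟩; simp_all
    · simp only [mem_neighborSet, adj_inl_inr3, Set.mem_image]
      constructor
      · rintro ⟨rfl, rfl⟩; exact absurd rfl ha
      · rintro ⟨b', hb', h⟩; simp_all
  rw [deg, hset, Set.ncard_image_of_injective _ Sum.inl_injective, deg]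

lemma deg_addK23_inl_eq :
    deg (addK23 G v' t) (.inl v') = deg G v' + 1 := by
  have hset : (addK23 G v' t).neighborSet (.inl v') =
      insert (Sum.inr (Sum.inr t)) (Sum.inl '' G.neighborSet v') := by
    ext x
    rcases x with b | (i | j)
    · simp only [mem_neighborSet, adj_inl_inl, Set.mem_insert_iff, Set.mem_image]
      constructor
      · intro h; exact Or.inr ⟨b, h, rfl⟩
      · rintro (h | ⟨b', hb', h⟩) <;> simp_all [mem_neighborSet]
    · simp only [mem_neighborSet, Set.mem_insert_iff, Set.mem_image]
      constructor
      · intro h; exact absurd h (adj_inl_inr2 G v' t v' i)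
      · rintro (h | ⟨b', hb', h⟩) <;> simp_all
    · simp only [mem_neighborSet, adj_inl_inr3, Set.mem_insert_iff, Set.mem_image]
      constructor
      · rintro ⟨-, rfl⟩; exact Or.inl rfl
      · rintro (h | ⟨b', hb', h⟩) <;> simp_all
  rw [deg, hset, Set.ncard_insert_of_notMem (by simp) (Set.toFinite _),
    Set.ncard_image_of_injective _ Sum.inl_injective, deg]

lemma deg_addK23_inr2 (i : Fin 2) :
    deg (addK23 G v' t) (.inr (.inl i)) = 3 := by
  have hset : (addK23 G v' t).neighborSet (.inr (.inl i)) =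
      Set.range (fun j : Fin 3 => (Sum.inr (Sum.inr j) : V ⊕ (Fin 2 ⊕ Fin 3))) := by
    ext x
    rcases x with b | (i' | j)
    · simp [mem_neighborSet, fun b => (adj_inl_inr3 G v' t b t).symm,
        (addK23 G v' t).adj_comm, adj_inl_inr2]
    · simp [mem_neighborSet, adj_inr2_inr2]
    · simp [mem_neighborSet, adj_inr2_inr3]
  rw [deg, hset, nbhd_range3]

lemma deg_addK23_inr3 (j : Fin 3) :
    deg (addK23 G v' t) (.inr (.inr j)) = if j = t then 3 else 2 := by
  have hset : (addK23 G v' t).neighborSet (.inr (.inr j)) =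
      Set.range (fun i : Fin 2 => (Sum.inr (Sum.inl i) : V ⊕ (Fin 2 ⊕ Fin 3))) ∪
      (if j = t then {Sum.inl v'} else ∅) := by
    ext x
    rcases x with b | (i' | j')
    · rw [mem_neighborSet, (addK23 G v' t).adj_comm, adj_inl_inr3]
      constructor
      · rintro ⟨rfl, rfl⟩; simp
      · rintro (⟨i', h⟩ | h)
        · simp_all
        · split_ifs at h <;> simp_all
    · rw [mem_neighborSet, (addK23 G v' t).adj_comm]
      constructor
      · intro _; exact Or.inl ⟨i', rfl⟩
      · intro _; exact adj_inr2_inr3 G v' t i' j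
    · rw [mem_neighborSet]
      constructor
      · intro h; exact absurd h (adj_inr3_inr3 G v' t j j')
      · rintro (⟨i', h⟩ | h)
        · simp_all
        · split_ifs at h <;> simp_all
  rw [deg, hset]
  have hr := nbhd_range2 (V := V)
  split_ifs with h
  · rw [Set.union_singleton, Set.ncard_insert_of_notMem (by simp) (Set.toFinite _), hr]
  · rw [Set.union_empty, hr]

end AddK23

lemma good_extend {V : Type} {G : SimpleGraph V} (hG : Good G) (v' : V)
    (hv' : deg G v' ≤ 2) (t : Fin 3) : Good (addK23 G v' t) := by
  obtain ⟨hfin, h1, h2, h3, h4⟩ := hG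
  have : Finite V := hfin
  have hd2 := deg_addK23_inr2 G v' t
  have hd3 := deg_addK23_inr3 G v' t
  have hdne : ∀ a, a ≠ v' → deg (addK23 G v' t) (.inl a) = deg G a :=
    fun a ha => deg_addK23_inl_ne G v' t ha
  have hdv : deg (addK23 G v' t) (.inl v') = deg G v' + 1 := deg_addK23_inl_eq G v' t
  refine ⟨inferInstance, ?_, ?_, ?_, ?_⟩
  · rintro (a | (i | j))
    · by_cases ha : a = v'
      · subst ha; rw [hdv]; omega
      · rw [hdne a ha]; exact h1 a
    · rw [hd2 i]; omega
    · rw [hd3 j]; split_ifs <;> omega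
  · -- subsingleton of degree-1 vertices
    have key : ∀ x : V ⊕ (Fin 2 ⊕ Fin 3), deg (addK23 G v' t) x = 1 →
        ∃ a, x = .inl a ∧ a ≠ v' ∧ deg G a = 1 := by
      rintro (a | (i | j)) hx
      · by_cases ha : a = v'
        · subst ha; rw [hdv] at hx; have := h1 a; omega
        · exact ⟨a, rfl, ha, by rwa [hdne a ha] at hx⟩
      · rw [hd2 i] at hx; omega
      · rw [hd3 j] at hx; split_ifs at hx <;> omega
    intro x hx y hy
    obtain ⟨a, rfl, -, ha1⟩ := key x hx
    obtain ⟨b, rfl, -, hb1⟩ := key y hy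
    exact congrArg Sum.inl (h2 ha1 hb1)
  · -- neighbors of degree-1 vertices have degree ≥ 3
    rintro (a | (i | j)) u hx hadj
    · by_cases ha : a = v'
      · subst ha; rw [hdv] at hx; have := h1 a; omega
      · rw [hdne a ha] at hx
        rcases u with b | (i | j)
        · rw [adj_inl_inl] at hadj
          have hb3 := h3 a b hx hadj
          by_cases hb : b = v'
          · subst hb; rw [hdv]; omega
          · rw [hdne b hb]; omega
        · exact absurd hadj (adj_inl_inr2 G v' t a i)
        · rw [adj_inl_inr3] at hadj; exact absurd hadj.1 ha
    · rw [hd2 i] at hx; omega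
    · rw [hd3 j] at hx; split_ifs at hx <;> omega
  · -- no two adjacent degree-2 vertices
    rintro (a | (i | j)) (b | (i' | j')) hadj ⟨hu2, hv2⟩
    · rw [adj_inl_inl] at hadj
      by_cases ha : a = v'
      · subst ha
        rw [hdv] at hu2
        have hb3 := h3 a b (by omega) hadj
        rw [hdne b hadj.ne'] at hv2; omega
      · by_cases hb : b = v'
        · subst hb
          rw [hdv] at hv2
          have ha3 := h3 b a (by omega) hadj.symm
          rw [hdne a hadj.ne] at hu2; omega
        · rw [hdne a ha] at hu2; rw [hdne b hb] at hv2
          exact h4 a b hadj ⟨hu2, hv2⟩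
    · exact absurd hadj (adj_inl_inr2 G v' t a i')
    · rw [adj_inl_inr3] at hadj
      rw [hd3 j', if_pos hadj.2] at hv2; omega
    · rw [hd2 i] at hu2; omega
    · rw [hd2 i] at hu2; omega
    · rw [hd2 i] at hu2; omega
    · rw [(addK23 G v' t).adj_comm, adj_inl_inr3] at hadj
      rw [hd3 j, if_pos hadj.2] at hu2; omega
    · rw [hd2 i'] at hv2; omega
    · exact absurd hadj (adj_inr3_inr3 G v' t j j')

lemma deg_iso {V W : Type} {G : SimpleGraph V} {H : SimpleGraph W} (e : G ≃g H) (v : V) :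
    deg H (e v) = deg G v := by
  rw [deg, deg, ← Nat.card_coe_set_eq, ← Nat.card_coe_set_eq]
  exact Nat.card_congr (e.mapNeighborSet v).symm

lemma good_iso {V W : Type} {G : SimpleGraph V} {H : SimpleGraph W} (e : G ≃g H)
    (hG : Good G) : Good H := by
  obtain ⟨hfin, h1, h2, h3, h4⟩ := hG
  have : Finite V := hfin
  have hd : ∀ w : W, deg H w = deg G (e.symm w) := by
    intro w
    conv_lhs => rw [show w = e (e.symm w) by simp]
    exact deg_iso e _
  have hadj : ∀ u v : W, H.Adj u v ↔ G.Adj (e.symm u) (e.symm v) := by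
    intro u v; exact e.symm.map_adj_iff.symm
  refine ⟨Finite.of_equiv V e.toEquiv, fun w => hd w ▸ h1 _, ?_, ?_, ?_⟩
  · intro x hx y hy
    simp only [Set.mem_setOf_eq, hd] at hx hy
    have := h2 hx hy
    have := congrArg e this
    simpa using this
  · intro v u hv hadj'
    rw [hd] at hv ⊢
    exact h3 _ _ hv ((hadj v u).mp hadj')
  · intro u v hadj' h
    rw [hd, hd] at h
    exact h4 _ _ ((hadj u v).mp hadj') h

/-- `FamilyB G` means that `G` belongs to the family `𝓑`: the smallest family of graphs
(closed under isomorphism) that contains the base graph and is closed under the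
operation `O₁`. -/
inductive FamilyB : ∀ {V : Type}, SimpleGraph V → Prop
  | base : FamilyB baseGraph
  | extend {V : Type} {G : SimpleGraph V} (hG : FamilyB G) (v' : V)
      (hv' : deg G v' ≤ 2) (t : Fin 3) : FamilyB (addK23 G v' t)
  | iso {V W : Type} {G : SimpleGraph V} {H : SimpleGraph W}
      (e : G ≃g H) (hG : FamilyB G) : FamilyB H

/-- **Proposition cB(f).** Every graph `G ∈ 𝓑` contains at most one
vertex of degree 1, and no two adjacent vertices of `G` both have degree 2 in `G`. -/
theorem statement12 {V : Type} (G : SimpleGraph V) (hG : FamilyB G) :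
    {v | deg G v = 1}.Subsingleton ∧
      ∀ u v : V, G.Adj u v → ¬ (deg G u = 2 ∧ deg G v = 2) := by
  have hgood : Good G := by
    induction hG with
    | base => exact good_base
    | extend hG v' hv' t ih => exact good_extend ih v' hv' t
    | iso e hG ih => exact good_iso e ih
  exact ⟨hgood.2.2.1, hgood.2.2.2.2⟩

end PaperIndepDom
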